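/- Let A be a commutative ring. If the principal ideal aA is integrally closed in A for every a ∈ W(A), then A is integrally closed in Q(A), i.e., Ā = A. -/

import Mathlib

open scoped TensorProduct

/-- `a` belongs to the integral closure of the ideal `I`: it satisfies an equation
`a ^ n + c 1 * a ^ (n - 1) + ⋯ + c n = 0` with `c i ∈ I ^ i`, for some `n ≥ 1`. -/
def MemIdealIntegralClosure {A : Type*} [CommRing A] (I : Ideal A) (a : A) : Prop :=
  ∃ n : ℕ, 0 < n ∧ ∃ c : ℕ → A,
    (∀ i ∈ Finset.Icc 1 n, c i ∈ I ^ i) ∧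
    a ^ n + ∑ i ∈ Finset.Icc 1 n, c i * a ^ (n - i) = 0

/-- The integral closure `Ī` of an ideal `I` of `A`, as a subset of `A`. -/
def idealIntegralClosure {A : Type*} [CommRing A] (I : Ideal A) : Set A :=
  {a | MemIdealIntegralClosure I a}

/-- An ideal `I` is integrally closed if `Ī = I`. -/
def Ideal.IsIntegrallyClosedIdeal {A : Type*} [CommRing A] (I : Ideal A) : Prop :=
  idealIntegralClosure I = (I : Set A)

/-- If the principal ideal `a A` is integrally closed for every non-zerodivisor `a`,
then `A` is integrally closed in its total ring of fractions `Q(A)`. -/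
theorem integrallyClosed_of_principal_integrallyClosed (A : Type*) [CommRing A]
    (h : ∀ a ∈ nonZeroDivisors A, Ideal.IsIntegrallyClosedIdeal (Ideal.span {a})) :
    ∀ x : FractionRing A, IsIntegral A x →
      ∃ a : A, algebraMap A (FractionRing A) a = x := by
  intro x hx
  rcases subsingleton_or_nontrivial A with hA | hA
  · haveI : Subsingleton (FractionRing A) :=
      subsingleton_of_forall_eq 0 fun y => by
        have h01 : (1 : FractionRing A) = 0 := by
          rw [← map_one (algebraMap A (FractionRing A)), ← map_zero (algebraMap A (FractionRing A))]
          congr 1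
          exact Subsingleton.elim _ _
        calc y = y * 1 := (mul_one y).symm
          _ = 0 := by rw [h01, mul_zero]
    exact ⟨0, Subsingleton.elim _ _⟩
  obtain ⟨p, hpm, hpe⟩ := hx
  set q := p * Polynomial.X with hq
  have hqm : q.Monic := hpm.mul Polynomial.monic_X
  have hqe : Polynomial.aeval x q = 0 := by
    rw [hq, map_mul, Polynomial.aeval_def, hpe, zero_mul]
  set n := q.natDegree with hn
  have hn1 : 0 < n := by
    have : q.natDegree = p.natDegree + 1 := Polynomial.natDegree_mul_X hpm.ne_zero
    omega
  obtain ⟨⟨r, s⟩, hrs⟩ := IsLocalization.mk'_surjective (nonZeroDivisors A) x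
  set φ := algebraMap A (FractionRing A) with hφdef
  have hφ : Function.Injective φ := IsFractionRing.injective A _
  have hr : φ r = x * φ s := by
    rw [← hrs]; exact (IsLocalization.mk'_spec _ r s).symm
  -- the key equation in A
  have key0 : x ^ n + ∑ i ∈ Finset.range n, φ (q.coeff i) * x ^ i = 0 := by
    have h1 := hqe
    rw [Polynomial.aeval_eq_sum_range, Finset.sum_range_succ, ← hn,
      hqm.coeff_natDegree, one_smul] at h1
    calc x ^ n + ∑ i ∈ Finset.range n, φ (q.coeff i) * x ^ i
        = (∑ i ∈ Finset.range n, q.coeff i • x ^ i) + x ^ n := by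
          rw [add_comm]
          congr 1
          exact Finset.sum_congr rfl fun i _ => by rw [Algebra.smul_def]
      _ = 0 := h1
  have key : r ^ n + ∑ j ∈ Finset.Icc 1 n, (q.coeff (n - j) * s ^ j) * r ^ (n - j) = 0 := by
    apply hφ
    rw [map_zero, map_add, map_pow, map_sum, hr, mul_pow]
    have hterm : ∀ j ∈ Finset.Icc 1 n,
        φ (q.coeff (n - j) * ↑s ^ j * r ^ (n - j))
          = φ s ^ n * (φ (q.coeff (n - j)) * x ^ (n - j)) := by
      intro j hj
      simp only [Finset.mem_Icc] at hj
      rw [map_mul, map_mul, map_pow, map_pow, hr, mul_pow]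
      have hs : φ s ^ j * φ s ^ (n - j) = φ s ^ n := by
        rw [← pow_add]; congr 1; omega
      calc φ (q.coeff (n - j)) * φ s ^ j * (x ^ (n - j) * φ s ^ (n - j))
          = (φ s ^ j * φ s ^ (n - j)) * (φ (q.coeff (n - j)) * x ^ (n - j)) := by ring
        _ = φ s ^ n * (φ (q.coeff (n - j)) * x ^ (n - j)) := by rw [hs]
    rw [Finset.sum_congr rfl hterm, ← Finset.mul_sum]
    have hre : (∑ j ∈ Finset.Icc 1 n, φ (q.coeff (n - j)) * x ^ (n - j))
        = ∑ i ∈ Finset.range n, φ (q.coeff i) * x ^ i := by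
      refine Finset.sum_nbij' (fun j => n - j) (fun i => n - i) ?_ ?_ ?_ ?_ ?_
      · intro a ha; simp only [Finset.mem_Icc] at ha; simp only [Finset.mem_range]; omega
      · intro a ha; simp only [Finset.mem_range] at ha; simp only [Finset.mem_Icc]; omega
      · intro a ha; simp only [Finset.mem_Icc] at ha; show n - (n - a) = a; omega
      · intro a ha; simp only [Finset.mem_range] at ha; show n - (n - a) = a; omega
      · intro a _; rfl
    rw [hre]
    calc x ^ n * φ s ^ n + φ s ^ n * ∑ i ∈ Finset.range n, φ (q.coeff i) * x ^ i
        = φ s ^ n * (x ^ n + ∑ i ∈ Finset.range n, φ (q.coeff i) * x ^ i) := by ring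
      _ = 0 := by rw [key0, mul_zero]
  have hmem : r ∈ Ideal.span {(s : A)} := by
    have hs := h s s.2
    rw [Ideal.IsIntegrallyClosedIdeal] at hs
    have : r ∈ idealIntegralClosure (Ideal.span {(s : A)}) := by
      refine ⟨n, hn1, fun j => q.coeff (n - j) * (s : A) ^ j, ?_, key⟩
      intro i hi
      rw [Ideal.span_singleton_pow, Ideal.mem_span_singleton]
      exact ⟨q.coeff (n - i), mul_comm _ _⟩
    rw [hs] at this
    exact this
  obtain ⟨t, ht⟩ := Ideal.mem_span_singleton'.mp hmem
  refine ⟨t, ?_⟩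
  have hu : IsUnit (φ s) := IsLocalization.map_units _ s
  apply hu.mul_left_cancel
  rw [mul_comm (φ s) (φ t), ← map_mul, ht, hr, mul_comm]
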